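/- Define γ₂(M) for a real matrix M ∈ ℝ^{A×B} as the infimum over all R ≥ 0 such that there exist families of vectors {u_a}_{a∈A}, {v_b}_{b∈B} (in some Euclidean space) with M[a,b] = ⟨u_a, v_b⟩ and ‖u_a‖·‖v_b‖ ≤ R for all a, b. Then γ₂(M) ≤ ‖M‖_∞ · √(rank(M)), where ‖M‖_∞ is the maximum absolute value of an entry of M. -/

import Mathlib

open Matrix Polynomial Filter

namespace G2

variable {r : ℕ}

lemma symm_dot {P : Matrix (Fin r) (Fin r) ℝ} (hP : Pᵀ = P) (u w : Fin r → ℝ) :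
    w ⬝ᵥ P *ᵥ u = u ⬝ᵥ P *ᵥ w := by
  rw [dotProduct_mulVec, ← mulVec_transpose, hP, dotProduct_comm]

lemma herm_transpose {P : Matrix (Fin r) (Fin r) ℝ} (hP : P.IsHermitian) : Pᵀ = P := by
  rw [← conjTranspose_eq_transpose_of_trivial]; exact hP

lemma abs_quad_le (E : Matrix (Fin r) (Fin r) ℝ) (z : Fin r → ℝ) :
    |z ⬝ᵥ E *ᵥ z| ≤ (∑ i, ∑ j, |E i j|) * (z ⬝ᵥ z) := by
  have hzz : ∀ i j : Fin r, |z i * z j| ≤ z ⬝ᵥ z := by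
    intro i j
    have hi : z i * z i ≤ z ⬝ᵥ z :=
      Finset.single_le_sum (f := fun k => z k * z k)
        (fun k _ => mul_self_nonneg (z k)) (Finset.mem_univ i)
    have hj : z j * z j ≤ z ⬝ᵥ z :=
      Finset.single_le_sum (f := fun k => z k * z k)
        (fun k _ => mul_self_nonneg (z k)) (Finset.mem_univ j)
    rw [abs_mul]
    nlinarith [sq_nonneg (|z i| - |z j|), abs_nonneg (z i), abs_nonneg (z j),
      sq_abs (z i), sq_abs (z j), abs_mul_self (z i), abs_mul_self (z j)]
  have h1 : z ⬝ᵥ E *ᵥ z = ∑ i, ∑ j, E i j * (z i * z j) := by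
    simp only [dotProduct, mulVec, Finset.mul_sum]
    exact Finset.sum_congr rfl fun i _ => Finset.sum_congr rfl fun j _ => by ring
  rw [h1]
  calc |∑ i, ∑ j, E i j * (z i * z j)| ≤ ∑ i, ∑ j, |E i j * (z i * z j)| := by
        refine (Finset.abs_sum_le_sum_abs _ _).trans ?_
        exact Finset.sum_le_sum fun i _ => Finset.abs_sum_le_sum_abs _ _
    _ ≤ ∑ i, ∑ j, |E i j| * (z ⬝ᵥ z) := by
        refine Finset.sum_le_sum fun i _ => Finset.sum_le_sum fun j _ => ?_
        rw [abs_mul]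
        exact mul_le_mul_of_nonneg_left (hzz i j) (abs_nonneg _)
    _ = (∑ i, ∑ j, |E i j|) * (z ⬝ᵥ z) := by
        simp only [← Finset.sum_mul]

lemma psd_cauchy_schwarz {P : Matrix (Fin r) (Fin r) ℝ} (hP : P.PosSemidef)
    (u w : Fin r → ℝ) : (u ⬝ᵥ P *ᵥ w) ^ 2 ≤ (u ⬝ᵥ P *ᵥ u) * (w ⬝ᵥ P *ᵥ w) := by
  have hPt : Pᵀ = P := herm_transpose hP.1
  have key : ∀ t : ℝ, 0 ≤ (w ⬝ᵥ P *ᵥ w) * (t * t) + (2 * (u ⬝ᵥ P *ᵥ w)) * t + u ⬝ᵥ P *ᵥ u := by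
    intro t
    have h0 := hP.dotProduct_mulVec_nonneg (u + t • w)
    have hexp : (u + t • w) ⬝ᵥ P *ᵥ (u + t • w) =
        (w ⬝ᵥ P *ᵥ w) * (t * t) + (2 * (u ⬝ᵥ P *ᵥ w)) * t + u ⬝ᵥ P *ᵥ u := by
      rw [mulVec_add, dotProduct_add, add_dotProduct, add_dotProduct,
        mulVec_smul, dotProduct_smul, smul_dotProduct, smul_dotProduct,
        dotProduct_smul, symm_dot hPt u w]
      simp [smul_eq_mul]; ring
    simpa only [star_trivial, hexp] using h0
  have hd := discrim_le_zero key
  rw [discrim] at hd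
  nlinarith [hd]


open scoped MatrixOrder in
noncomputable def _root_.Matrix.PosSemidef.sqrt {P : Matrix (Fin r) (Fin r) ℝ}
    (_ : P.PosSemidef) : Matrix (Fin r) (Fin r) ℝ := CFC.sqrt P

open scoped MatrixOrder in
lemma _root_.Matrix.PosSemidef.posSemidef_sqrt {P : Matrix (Fin r) (Fin r) ℝ}
    (hP : P.PosSemidef) : hP.sqrt.PosSemidef :=
  Matrix.nonneg_iff_posSemidef.mp (CFC.sqrt_nonneg P)

open scoped MatrixOrder in
lemma _root_.Matrix.PosSemidef.sqrt_mul_self {P : Matrix (Fin r) (Fin r) ℝ}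
    (hP : P.PosSemidef) : hP.sqrt * hP.sqrt = P :=
  CFC.sqrt_mul_sqrt_self P (Matrix.nonneg_iff_posSemidef.mpr hP)

lemma cont_quad {r : ℕ} (v : Fin r → ℝ) :
    Continuous fun P : Matrix (Fin r) (Fin r) ℝ => v ⬝ᵥ P *ᵥ v :=
  continuous_const.dotProduct (continuous_id.matrix_mulVec continuous_const)

lemma dot_sum {ι : Type*} [Fintype ι] {r : ℕ} (v : Fin r → ℝ) (f : ι → Fin r → ℝ) :
    v ⬝ᵥ (∑ a, f a) = ∑ a, v ⬝ᵥ f a := by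
  simp only [dotProduct, Finset.sum_apply, Finset.mul_sum]
  exact Finset.sum_comm

lemma sum_dot {ι : Type*} [Fintype ι] {r : ℕ} (f : ι → Fin r → ℝ) (v : Fin r → ℝ) :
    (∑ a, f a) ⬝ᵥ v = ∑ a, f a ⬝ᵥ v := by
  simp only [dotProduct, Finset.sum_apply, Finset.sum_mul]
  exact Finset.sum_comm

lemma mulVec_sum' {ι : Type*} [Fintype ι] {r : ℕ} (P : Matrix (Fin r) (Fin r) ℝ)
    (f : ι → Fin r → ℝ) : P *ᵥ (∑ a, f a) = ∑ a, P *ᵥ f a := by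
  rw [← mulVecLin_apply, map_sum]
  simp [mulVecLin_apply]

lemma exists_maximizer {A : Type*} [Fintype A] [Nonempty A] {r : ℕ} (x : A → Fin r → ℝ)
    (hspan : Submodule.span ℝ (Set.range x) = ⊤) :
    ∃ P : Matrix (Fin r) (Fin r) ℝ, P.PosSemidef ∧ (∀ a, x a ⬝ᵥ P *ᵥ x a ≤ 1) ∧ 0 < P.det ∧
      ∀ Q : Matrix (Fin r) (Fin r) ℝ, Q.PosSemidef → (∀ a, x a ⬝ᵥ Q *ᵥ x a ≤ 1) → Q.det ≤ P.det := by
  classical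
  set S : Set (Matrix (Fin r) (Fin r) ℝ) :=
    {P | P.PosSemidef ∧ ∀ a, x a ⬝ᵥ P *ᵥ x a ≤ 1} with hS
  -- closedness
  have hclosed : IsClosed S := by
    have h1 : S = ({P : Matrix (Fin r) (Fin r) ℝ | Pᴴ = P} ∩
        ⋂ v : Fin r → ℝ, {P | 0 ≤ v ⬝ᵥ P *ᵥ v}) ∩ ⋂ a : A, {P | x a ⬝ᵥ P *ᵥ x a ≤ 1} := by
      ext P
      simp only [hS, Set.mem_setOf_eq, Set.mem_inter_iff, Set.mem_iInter,
        Matrix.posSemidef_iff_dotProduct_mulVec, Matrix.IsHermitian, star_trivial]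
    rw [h1]
    refine IsClosed.inter (IsClosed.inter ?_ ?_) ?_
    · exact isClosed_eq (continuous_id.matrix_conjTranspose) continuous_id
    · exact isClosed_iInter fun v => isClosed_le continuous_const (cont_quad v)
    · exact isClosed_iInter fun a => isClosed_le (cont_quad (x a)) continuous_const
  -- coefficients expressing the standard basis
  have hcoef : ∀ i : Fin r, ∃ c : A → ℝ, ∑ a, c a • x a = Pi.single i 1 := by
    intro i
    have : (Pi.single i 1 : Fin r → ℝ) ∈ Submodule.span ℝ (Set.range x) := by
      rw [hspan]; trivial
    rwa [Submodule.mem_span_range_iff_exists_fun] at this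
  choose c hc using hcoef
  set K : ℝ := ∑ i, ∑ a, |c i a| with hK
  have hKi : ∀ i, ∑ a, |c i a| ≤ K :=
    fun i => Finset.single_le_sum (f := fun i => ∑ a, |c i a|)
      (fun k _ => Finset.sum_nonneg fun a _ => abs_nonneg _) (Finset.mem_univ i)
  -- entries of members of S are bounded
  have hbound : ∀ P ∈ S, ∀ i j, |P i j| ≤ K * K := by
    rintro P ⟨hpsd, hcon⟩ i j
    have hxx : ∀ a a' : A, |x a ⬝ᵥ P *ᵥ x a'| ≤ 1 := by
      intro a a'
      rw [← sq_le_one_iff_abs_le_one]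
      calc (x a ⬝ᵥ P *ᵥ x a') ^ 2 ≤ (x a ⬝ᵥ P *ᵥ x a) * (x a' ⬝ᵥ P *ᵥ x a') :=
            psd_cauchy_schwarz hpsd _ _
        _ ≤ 1 * 1 := by
            have h1 := hpsd.dotProduct_mulVec_nonneg (x a)
            have h2 := hpsd.dotProduct_mulVec_nonneg (x a')
            rw [star_trivial] at h1 h2
            exact mul_le_mul (hcon a) (hcon a') h2 (by linarith [hcon a, h1])
        _ = 1 := by ring
    have hentry : P i j = Pi.single i 1 ⬝ᵥ P *ᵥ Pi.single j 1 := by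
      simp [mulVec_single, dotProduct_single]
    rw [hentry, ← hc i, ← hc j]
    have hexp : (∑ a, c i a • x a) ⬝ᵥ P *ᵥ (∑ a, c j a • x a) =
        ∑ a, ∑ a', c i a * c j a' * (x a ⬝ᵥ P *ᵥ x a') := by
      rw [mulVec_sum', sum_dot]
      refine Finset.sum_congr rfl fun a _ => ?_
      rw [dot_sum]
      refine Finset.sum_congr rfl fun a' _ => ?_
      rw [mulVec_smul, smul_dotProduct, dotProduct_smul, smul_eq_mul, smul_eq_mul]
      ring
    rw [hexp]
    calc |∑ a, ∑ a', c i a * c j a' * (x a ⬝ᵥ P *ᵥ x a')|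
        ≤ ∑ a, ∑ a', |c i a * c j a' * (x a ⬝ᵥ P *ᵥ x a')| := by
          refine (Finset.abs_sum_le_sum_abs _ _).trans ?_
          exact Finset.sum_le_sum fun a _ => Finset.abs_sum_le_sum_abs _ _
      _ ≤ ∑ a, ∑ a', |c i a| * |c j a'| := by
          refine Finset.sum_le_sum fun a _ => Finset.sum_le_sum fun a' _ => ?_
          rw [abs_mul, abs_mul]
          calc |c i a| * |c j a'| * |x a ⬝ᵥ P *ᵥ x a'| ≤ |c i a| * |c j a'| * 1 :=
                mul_le_mul_of_nonneg_left (hxx a a') (mul_nonneg (abs_nonneg _) (abs_nonneg _))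
            _ = |c i a| * |c j a'| := by ring
      _ = (∑ a, |c i a|) * (∑ a', |c j a'|) := by
          rw [Finset.sum_mul_sum]
      _ ≤ K * K := by
          refine mul_le_mul (hKi i) (hKi j) (Finset.sum_nonneg fun a _ => abs_nonneg _) ?_
          exact le_trans (Finset.sum_nonneg fun a _ => abs_nonneg _) (hKi i)
  -- compactness
  have hcompact : IsCompact S := by
    have hsub : S ⊆ Set.univ.pi fun _ : Fin r => Set.univ.pi fun _ : Fin r =>
        Set.Icc (-(K * K)) (K * K) := by
      intro P hP
      intro i _
      intro j _
      have := hbound P hP i j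
      rw [abs_le] at this
      exact ⟨this.1, this.2⟩
    have hcpt : IsCompact (Set.univ.pi fun _ : Fin r => Set.univ.pi fun _ : Fin r =>
        Set.Icc (-(K * K)) (K * K)) :=
      isCompact_univ_pi fun _ => isCompact_univ_pi fun _ => isCompact_Icc
    exact hcpt.of_isClosed_subset hclosed hsub
  -- S contains a positive multiple of the identity
  set T : ℝ := 1 + ∑ a, x a ⬝ᵥ x a with hT
  have hT1 : 1 ≤ T := by
    have : 0 ≤ ∑ a, x a ⬝ᵥ x a :=
      Finset.sum_nonneg fun a _ => Finset.sum_nonneg fun i _ => mul_self_nonneg _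
    linarith
  have hTpos : 0 < T := lt_of_lt_of_le one_pos hT1
  have hmem : (T⁻¹ • 1 : Matrix (Fin r) (Fin r) ℝ) ∈ S := by
    constructor
    · refine Matrix.PosSemidef.of_dotProduct_mulVec_nonneg ?_ ?_
      · rw [IsHermitian]
        simp [conjTranspose_smul, conjTranspose_one]
      · intro z
        rw [star_trivial, smul_mulVec, one_mulVec, dotProduct_smul, smul_eq_mul]
        exact mul_nonneg (inv_nonneg.mpr (le_of_lt hTpos))
          (Finset.sum_nonneg fun i _ => mul_self_nonneg _)
    · intro a
      rw [smul_mulVec, one_mulVec, dotProduct_smul, smul_eq_mul]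
      have hle : x a ⬝ᵥ x a ≤ T := by
        have h1 : x a ⬝ᵥ x a ≤ ∑ a', x a' ⬝ᵥ x a' :=
          Finset.single_le_sum (f := fun a' => x a' ⬝ᵥ x a')
            (fun a' _ => Finset.sum_nonneg fun i _ => mul_self_nonneg _) (Finset.mem_univ a)
        linarith
      calc T⁻¹ * (x a ⬝ᵥ x a) ≤ T⁻¹ * T :=
            mul_le_mul_of_nonneg_left hle (inv_nonneg.mpr (le_of_lt hTpos))
        _ = 1 := inv_mul_cancel₀ (ne_of_gt hTpos)
  -- extract maximizer
  obtain ⟨P, hPS, hPmax⟩ := hcompact.exists_isMaxOn ⟨_, hmem⟩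
    ((continuous_id.matrix_det).continuousOn)
  have hdet : 0 < P.det := by
    have h1 : (T⁻¹ • (1 : Matrix (Fin r) (Fin r) ℝ)).det ≤ P.det := hPmax hmem
    have h2 : (T⁻¹ • (1 : Matrix (Fin r) (Fin r) ℝ)).det = T⁻¹ ^ r := by
      rw [det_smul, det_one, mul_one, Fintype.card_fin]
    rw [h2] at h1
    exact lt_of_lt_of_le (pow_pos (inv_pos.mpr hTpos) r) h1
  exact ⟨P, hPS.1, hPS.2, hdet, fun Q hQ1 hQ2 => hPmax (Set.mem_setOf_eq ▸ ⟨hQ1, hQ2⟩)⟩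



lemma exists_factorization {A B : Type*} [Fintype A] [Fintype B] (M : Matrix A B ℝ) :
    ∃ (x : A → (Fin M.rank → ℝ)) (y : B → (Fin M.rank → ℝ)),
      (∀ a b, M a b = x a ⬝ᵥ y b) ∧
      Submodule.span ℝ (Set.range x) = ⊤ := by
  classical
  set W := LinearMap.range M.mulVecLin with hW
  have hfr : Module.finrank ℝ W = M.rank := rfl
  let bas : Module.Basis (Fin M.rank) ℝ W := Module.finBasisOfFinrankEq ℝ W hfr
  let x : A → Fin M.rank → ℝ := fun a i => (bas i : A → ℝ) a
  have hcol : ∀ b : B, (fun a => M a b) ∈ W := by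
    intro b
    exact ⟨Pi.single b 1, by ext a; simp [mulVecLin]⟩
  let y : B → Fin M.rank → ℝ := fun b => bas.repr ⟨fun a => M a b, hcol b⟩
  refine ⟨x, y, ?_, ?_⟩
  · intro a b
    have := bas.sum_repr ⟨fun a => M a b, hcol b⟩
    have hcoe := congrArg (Subtype.val) this
    have := congrFun hcoe a
    simp only [AddSubmonoidClass.coe_finset_sum, SetLike.val_smul, Finset.sum_apply,
      Pi.smul_apply, smul_eq_mul] at this
    rw [dotProduct]
    rw [← this]
    exact Finset.sum_congr rfl fun i _ => by rw [mul_comm]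
  · by_contra hne
    have hlt : Submodule.span ℝ (Set.range x) < ⊤ := lt_top_iff_ne_top.mpr hne
    obtain ⟨f, hf0, hfbot⟩ := Submodule.exists_dual_map_eq_bot_of_lt_top hlt inferInstance
    set c : Fin M.rank → ℝ := fun i => f (Pi.single i 1) with hc
    have hfc : ∀ z : Fin M.rank → ℝ, f z = ∑ i, z i * c i := by
      intro z
      conv_lhs => rw [pi_eq_sum_univ z]
      rw [map_sum]
      refine Finset.sum_congr rfl fun i _ => ?_
      rw [_root_.map_smul, smul_eq_mul]
      congr 1
      have : (fun j => if i = j then (1:ℝ) else 0) = Pi.single i 1 := by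
        ext j; simp [Pi.single_apply, eq_comm]
      rw [this]
    have hfx : ∀ a, f (x a) = 0 := by
      intro a
      have : f (x a) ∈ Submodule.map f (Submodule.span ℝ (Set.range x)) :=
        Submodule.mem_map_of_mem (Submodule.subset_span ⟨a, rfl⟩)
      rw [hfbot] at this
      simpa using this
    -- ∑ i, c i • bas i = 0
    have hsum : (∑ i, c i • bas i : W) = 0 := by
      have hval : ((∑ i, c i • bas i : W) : A → ℝ) = 0 := by
        ext a
        simp only [AddSubmonoidClass.coe_finset_sum, SetLike.val_smul, Finset.sum_apply,
          Pi.smul_apply, smul_eq_mul]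
        have := hfx a
        rw [hfc (x a)] at this
        simpa [x, mul_comm] using this
      exact Subtype.ext hval
    have hc0 : ∀ i, c i = 0 := by
      have hli := bas.linearIndependent
      rw [Fintype.linearIndependent_iff] at hli
      exact hli c hsum
    apply hf0
    refine LinearMap.ext fun z => ?_
    rw [hfc z]
    simp [hc0]


lemma first_order {A : Type*} [Fintype A] [Nonempty A] {r : ℕ} (x : A → Fin r → ℝ)
    {P : Matrix (Fin r) (Fin r) ℝ} (hpsd : P.PosSemidef)
    (hcon : ∀ a, x a ⬝ᵥ P *ᵥ x a ≤ 1) (hdet : 0 < P.det)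
    (hmax : ∀ Q : Matrix (Fin r) (Fin r) ℝ, Q.PosSemidef →
      (∀ a, x a ⬝ᵥ Q *ᵥ x a ≤ 1) → Q.det ≤ P.det)
    (D : Matrix (Fin r) (Fin r) ℝ) (hD : Dᵀ = D)
    (hact : ∀ a, x a ⬝ᵥ P *ᵥ x a = 1 → x a ⬝ᵥ D *ᵥ x a ≤ 0) :
    trace (P⁻¹ * D) ≤ 0 := by
  classical
  have hPunit : IsUnit P.det := isUnit_iff_ne_zero.mpr (ne_of_gt hdet)
  set Q : Matrix (Fin r) (Fin r) ℝ := hpsd.sqrt with hQdef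
  have hQpsd : Q.PosSemidef := hpsd.posSemidef_sqrt
  have hQherm : Qᴴ = Q := hQpsd.1
  have hQsym : Qᵀ = Q := by rw [← conjTranspose_eq_transpose_of_trivial]; exact hQherm
  have hQQ : Q * Q = P := hpsd.sqrt_mul_self
  have hQdet : IsUnit Q.det := by
    have : Q.det * Q.det = P.det := by rw [← det_mul, hQQ]
    refine isUnit_iff_ne_zero.mpr fun h => ?_
    rw [h, mul_zero] at this
    exact (ne_of_gt hdet) this.symm
  set E : Matrix (Fin r) (Fin r) ℝ := Q⁻¹ * D * Q⁻¹ with hEdef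
  have hEsym : Eᵀ = E := by
    rw [hEdef, transpose_mul, transpose_mul, transpose_nonsing_inv, hQsym, hD,
      Matrix.mul_assoc]
  have hQEQ : Q * E * Q = D := by
    rw [hEdef]
    calc Q * (Q⁻¹ * D * Q⁻¹) * Q = (Q * Q⁻¹) * D * (Q⁻¹ * Q) := by
          simp only [Matrix.mul_assoc]
      _ = D := by rw [mul_nonsing_inv _ hQdet, nonsing_inv_mul _ hQdet, Matrix.one_mul,
          Matrix.mul_one]
  set CE : ℝ := ∑ i, ∑ j, |E i j| with hCE
  have hCE0 : 0 ≤ CE := Finset.sum_nonneg fun i _ => Finset.sum_nonneg fun j _ => abs_nonneg _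
  set δ₁ : ℝ := (CE + 1)⁻¹ with hδ₁
  have hδ₁pos : 0 < δ₁ := inv_pos.mpr (by linarith)
  -- perturbed matrix stays psd
  have hpsd' : ∀ t : ℝ, 0 ≤ t → t ≤ δ₁ → (P + t • D).PosSemidef := by
    intro t ht0 htδ
    have hone : (1 + t • E).PosSemidef := by
      refine Matrix.PosSemidef.of_dotProduct_mulVec_nonneg ?_ ?_
      · rw [IsHermitian, conjTranspose_add, conjTranspose_smul, conjTranspose_one,
          conjTranspose_eq_transpose_of_trivial, hEsym]
        simp
      · intro z
        rw [star_trivial, add_mulVec, one_mulVec, dotProduct_add, smul_mulVec,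
          dotProduct_smul, smul_eq_mul]
        have h1 : |z ⬝ᵥ E *ᵥ z| ≤ CE * (z ⬝ᵥ z) := abs_quad_le E z
        have hz0 : 0 ≤ z ⬝ᵥ z := Finset.sum_nonneg fun i _ => mul_self_nonneg _
        have htCE : t * CE ≤ 1 := by
          calc t * CE ≤ δ₁ * CE := mul_le_mul_of_nonneg_right htδ hCE0
            _ ≤ 1 := by
              rw [hδ₁]
              rw [inv_mul_le_iff₀ (by linarith : (0:ℝ) < CE + 1)]
              linarith
        have habs : -(CE * (z ⬝ᵥ z)) ≤ z ⬝ᵥ E *ᵥ z := neg_le_of_abs_le h1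
        nlinarith [mul_le_mul_of_nonneg_right htCE hz0, mul_le_mul_of_nonneg_left habs ht0]
    have hfact : P + t • D = Q * (1 + t • E) * Qᴴ := by
      rw [hQherm, Matrix.mul_add, Matrix.add_mul, Matrix.mul_one, hQQ, Matrix.mul_smul,
        Matrix.smul_mul, hQEQ]
    rw [hfact]
    exact hone.mul_mul_conjTranspose_same Q
  -- perturbed matrix satisfies the constraints
  set δ₂ : ℝ := Finset.univ.inf' Finset.univ_nonempty
    (fun a => if x a ⬝ᵥ D *ᵥ x a ≤ 0 then 1
      else (1 - x a ⬝ᵥ P *ᵥ x a) / (x a ⬝ᵥ D *ᵥ x a)) with hδ₂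
  have hδ₂pos : 0 < δ₂ := by
    rw [hδ₂, Finset.lt_inf'_iff]
    intro a _
    split_ifs with hga
    · exact one_pos
    · push_neg at hga
      have hsa : 0 < 1 - x a ⬝ᵥ P *ᵥ x a := by
        rcases lt_or_eq_of_le (hcon a) with h | h
        · linarith
        · exact absurd (hact a h) (not_le.mpr hga)
      exact div_pos hsa hga
  have hcon' : ∀ t : ℝ, 0 ≤ t → t ≤ δ₂ → ∀ a, x a ⬝ᵥ (P + t • D) *ᵥ x a ≤ 1 := by
    intro t ht0 htδ a
    have hexp : x a ⬝ᵥ (P + t • D) *ᵥ x a = x a ⬝ᵥ P *ᵥ x a + t * (x a ⬝ᵥ D *ᵥ x a) := by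
      rw [add_mulVec, dotProduct_add, smul_mulVec, dotProduct_smul, smul_eq_mul]
    rw [hexp]
    by_cases hga : x a ⬝ᵥ D *ᵥ x a ≤ 0
    · nlinarith [hcon a, mul_nonpos_of_nonneg_of_nonpos ht0 hga]
    · push_neg at hga
      have h1 : δ₂ ≤ (1 - x a ⬝ᵥ P *ᵥ x a) / (x a ⬝ᵥ D *ᵥ x a) := by
        have h0 := Finset.inf'_le (s := (Finset.univ : Finset A))
          (fun a => if x a ⬝ᵥ D *ᵥ x a ≤ 0 then (1:ℝ)
            else (1 - x a ⬝ᵥ P *ᵥ x a) / (x a ⬝ᵥ D *ᵥ x a)) (Finset.mem_univ a)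
        rw [if_neg (not_le.mpr hga)] at h0
        rw [hδ₂]
        convert h0 using 2
      have h2 : t ≤ (1 - x a ⬝ᵥ P *ᵥ x a) / (x a ⬝ᵥ D *ᵥ x a) := le_trans htδ h1
      have h3 : t * (x a ⬝ᵥ D *ᵥ x a) ≤ 1 - x a ⬝ᵥ P *ᵥ x a := by
        calc t * (x a ⬝ᵥ D *ᵥ x a)
            ≤ ((1 - x a ⬝ᵥ P *ᵥ x a) / (x a ⬝ᵥ D *ᵥ x a)) * (x a ⬝ᵥ D *ᵥ x a) :=
              mul_le_mul_of_nonneg_right h2 (le_of_lt hga)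
          _ = 1 - x a ⬝ᵥ P *ᵥ x a := div_mul_cancel₀ _ (ne_of_gt hga)
      linarith
  -- determinant inequality on [0, δ]
  set δ : ℝ := min δ₁ δ₂ with hδ
  have hδpos : 0 < δ := lt_min hδ₁pos hδ₂pos
  set A₀ : Matrix (Fin r) (Fin r) ℝ := P⁻¹ * D with hA₀
  have hdet1 : ∀ t : ℝ, 0 < t → t ≤ δ → (1 + t • A₀).det ≤ 1 := by
    intro t ht0 htδ
    have h1 : (P + t • D).det ≤ P.det :=
      hmax _ (hpsd' t (le_of_lt ht0) (le_trans htδ (min_le_left _ _)))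
        (hcon' t (le_of_lt ht0) (le_trans htδ (min_le_right _ _)))
    have h2 : P + t • D = P * (1 + t • A₀) := by
      rw [hA₀, Matrix.mul_add, Matrix.mul_one, Matrix.mul_smul,
        Matrix.mul_nonsing_inv_cancel_left _ _ hPunit]
    rw [h2, det_mul] at h1
    nlinarith [h1, hdet]
  -- conclude via the polynomial expansion of the determinant
  set q : Polynomial ℝ := (Matrix.det (1 + (X : ℝ[X]) • A₀.map C)).divX.divX with hq
  have hkey : ∀ t : ℝ, 0 < t → t ≤ δ → trace A₀ ≤ -(q.eval t * t) := by
    intro t ht0 htδ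
    have h1 := hdet1 t ht0 htδ
    rw [Matrix.det_one_add_smul t A₀] at h1
    have h2 : trace A₀ * t + q.eval t * t ^ 2 ≤ 0 := by rw [hq]; linarith
    have h3 : (trace A₀ + q.eval t * t) * t ≤ 0 := by nlinarith
    nlinarith [mul_pos ht0 ht0]
  have hlim : Tendsto (fun t : ℝ => -(q.eval t * t)) (nhdsWithin 0 (Set.Ioi 0)) (nhds 0) := by
    have hc : Continuous fun t : ℝ => -(q.eval t * t) := (q.continuous.mul continuous_id).neg
    have := hc.tendsto 0
    simp only [eval_zero, mul_zero, neg_zero] at this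
    exact this.mono_left nhdsWithin_le_nhds
  have hev : ∀ᶠ t in nhdsWithin (0:ℝ) (Set.Ioi 0), trace A₀ ≤ -(q.eval t * t) := by
    filter_upwards [Ioc_mem_nhdsGT_of_mem (Set.mem_Ico.mpr ⟨le_refl 0, hδpos⟩)] with t ht
    exact hkey t ht.1 ht.2
  exact ge_of_tendsto hlim hev


lemma vecMulVec_quad (u z : Fin r → ℝ) :
    z ⬝ᵥ (vecMulVec u u) *ᵥ z = (u ⬝ᵥ z) ^ 2 := by
  have h1 : vecMulVec u u *ᵥ z = (u ⬝ᵥ z) • u := by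
    ext i
    simp only [vecMulVec, mulVec, dotProduct, Pi.smul_apply, smul_eq_mul, of_apply]
    calc ∑ j, u i * u j * z j = ∑ j, u i * (u j * z j) :=
          Finset.sum_congr rfl fun j _ => by ring
      _ = u i * ∑ j, u j * z j := (Finset.mul_sum _ _ _).symm
      _ = (∑ j, u j * z j) * u i := mul_comm _ _
  rw [h1, dotProduct_smul, smul_eq_mul, dotProduct_comm z u, sq]

lemma trace_mul_vecMulVec (N : Matrix (Fin r) (Fin r) ℝ) (u : Fin r → ℝ) :
    trace (N * vecMulVec u u) = u ⬝ᵥ N *ᵥ u := by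
  simp only [trace, Matrix.mul_apply, vecMulVec, diag, dotProduct, mulVec, of_apply,
    Finset.mul_sum]
  refine Finset.sum_congr rfl fun i _ => Finset.sum_congr rfl fun j _ => by ring

lemma euclid_inner (w z : Fin r → ℝ) :
    (inner ℝ ((WithLp.equiv 2 (Fin r → ℝ)).symm w) ((WithLp.equiv 2 (Fin r → ℝ)).symm z) : ℝ)
      = w ⬝ᵥ z := by
  simp [PiLp.inner_apply, RCLike.inner_apply, dotProduct, WithLp.equiv_symm_apply, mul_comm]

lemma euclid_norm (w : Fin r → ℝ) :
    ‖((WithLp.equiv 2 (Fin r → ℝ)).symm w : EuclideanSpace ℝ (Fin r))‖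
      = Real.sqrt (w ⬝ᵥ w) := by
  rw [EuclideanSpace.norm_eq]
  congr 1
  simp [dotProduct, WithLp.equiv_symm_apply, Real.norm_eq_abs, sq_abs, sq]

end G2

noncomputable def gamma2 {A B : Type*} [Fintype A] [Fintype B] (M : Matrix A B ℝ) : ℝ :=
  sInf {R : ℝ | 0 ≤ R ∧ ∃ (d : ℕ) (u : A → EuclideanSpace ℝ (Fin d))
    (v : B → EuclideanSpace ℝ (Fin d)),
    (∀ a b, M a b = inner ℝ (u a) (v b)) ∧ ∀ a b, ‖u a‖ * ‖v b‖ ≤ R}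

open G2 Matrix

theorem gamma2_le_norm_mul_sqrt_rank {A B : Type*} [Fintype A] [Fintype B]
    [Nonempty A] [Nonempty B] (M : Matrix A B ℝ) :
    gamma2 M ≤ (⨆ a : A, ⨆ b : B, |M a b|) * Real.sqrt M.rank := by
  classical
  set c : ℝ := ⨆ a : A, ⨆ b : B, |M a b| with hcdef
  have hbb : ∀ a : A, BddAbove (Set.range fun b => |M a b|) :=
    fun a => (Set.finite_range _).bddAbove
  have hbb2 : BddAbove (Set.range fun a => ⨆ b, |M a b|) := (Set.finite_range _).bddAbove
  have hc : ∀ a b, |M a b| ≤ c :=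
    fun a b => le_trans (le_ciSup (hbb a) b) (le_ciSup hbb2 a)
  have hc0 : 0 ≤ c := le_trans (abs_nonneg _) (hc (Classical.arbitrary A) (Classical.arbitrary B))
  set r : ℕ := M.rank with hrdef
  obtain ⟨x, y, hxy, hspan⟩ := exists_factorization M
  obtain ⟨P, hpsd, hcon, hdet, hmax⟩ := exists_maximizer x hspan
  have hPunit : IsUnit P.det := isUnit_iff_ne_zero.mpr (ne_of_gt hdet)
  set Q : Matrix (Fin r) (Fin r) ℝ := hpsd.sqrt with hQdef
  have hQpsd : Q.PosSemidef := hpsd.posSemidef_sqrt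
  have hQsym : Qᵀ = Q := herm_transpose hQpsd.1
  have hQQ : Q * Q = P := hpsd.sqrt_mul_self
  have hQdet : IsUnit Q.det := by
    have h : Q.det * Q.det = P.det := by rw [← det_mul, hQQ]
    refine isUnit_iff_ne_zero.mpr fun h0 => ?_
    rw [h0, mul_zero] at h
    exact (ne_of_gt hdet) h.symm
  have hQisym : (Q⁻¹)ᵀ = Q⁻¹ := by rw [transpose_nonsing_inv, hQsym]
  have hPinv : Q⁻¹ * Q⁻¹ = P⁻¹ := by rw [← Matrix.mul_inv_rev, hQQ]
  -- the key estimate coming from the first-order condition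
  have hyb : ∀ b : B, y b ⬝ᵥ P⁻¹ *ᵥ y b ≤ c ^ 2 * r := by
    intro b
    set D : Matrix (Fin r) (Fin r) ℝ := vecMulVec (y b) (y b) - c ^ 2 • P with hDdef
    have hDsym : Dᵀ = D := by
      rw [hDdef, transpose_sub, transpose_smul, herm_transpose hpsd.1]
      congr 1
      ext i j
      simp [vecMulVec, mul_comm]
    have hact : ∀ a, x a ⬝ᵥ P *ᵥ x a = 1 → x a ⬝ᵥ D *ᵥ x a ≤ 0 := by
      intro a ha
      have hcalc : x a ⬝ᵥ D *ᵥ x a = (y b ⬝ᵥ x a) ^ 2 - c ^ 2 * (x a ⬝ᵥ P *ᵥ x a) := by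
        rw [hDdef, sub_mulVec, dotProduct_sub, vecMulVec_quad, smul_mulVec,
          dotProduct_smul, smul_eq_mul]
      rw [hcalc, ha, mul_one]
      have hM : |M a b| ≤ c := hc a b
      have hMe : M a b = y b ⬝ᵥ x a := by rw [hxy a b, dotProduct_comm]
      rw [← hMe]
      nlinarith [sq_abs (M a b), abs_nonneg (M a b)]
    have hfo := first_order x hpsd hcon hdet hmax D hDsym hact
    have hexp : trace (P⁻¹ * D) = y b ⬝ᵥ P⁻¹ *ᵥ y b - c ^ 2 * r := by
      rw [hDdef, Matrix.mul_sub, trace_sub, trace_mul_vecMulVec, Matrix.mul_smul, trace_smul,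
        nonsing_inv_mul _ hPunit, trace_one, smul_eq_mul, Fintype.card_fin]
    rw [hexp] at hfo
    linarith
  -- build the Euclidean vectors
  set u : A → EuclideanSpace ℝ (Fin r) :=
    fun a => (WithLp.equiv 2 (Fin r → ℝ)).symm (Q *ᵥ x a) with hudef
  set v : B → EuclideanSpace ℝ (Fin r) :=
    fun b => (WithLp.equiv 2 (Fin r → ℝ)).symm (Q⁻¹ *ᵥ y b) with hvdef
  have hinner : ∀ a b, M a b = (inner ℝ (u a) (v b) : ℝ) := by
    intro a b
    rw [hudef, hvdef]
    rw [euclid_inner]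
    rw [show (Q *ᵥ x a) ⬝ᵥ (Q⁻¹ *ᵥ y b) = x a ⬝ᵥ Q *ᵥ (Q⁻¹ *ᵥ y b) by
      rw [dotProduct_comm]; exact symm_dot hQsym (x a) (Q⁻¹ *ᵥ y b)]
    rw [mulVec_mulVec, mul_nonsing_inv _ hQdet, one_mulVec]
    exact hxy a b
  have hnu : ∀ a, ‖u a‖ ≤ 1 := by
    intro a
    rw [hudef]
    rw [euclid_norm]
    rw [show (Q *ᵥ x a) ⬝ᵥ (Q *ᵥ x a) = x a ⬝ᵥ P *ᵥ x a by
      nth_rewrite 1 [show (Q *ᵥ x a) ⬝ᵥ (Q *ᵥ x a) = x a ⬝ᵥ Q *ᵥ (Q *ᵥ x a) from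
        symm_dot hQsym (x a) (Q *ᵥ x a)]
      rw [mulVec_mulVec, hQQ]]
    calc Real.sqrt (x a ⬝ᵥ P *ᵥ x a) ≤ Real.sqrt 1 := Real.sqrt_le_sqrt (hcon a)
      _ = 1 := Real.sqrt_one
  have hnv : ∀ b, ‖v b‖ ≤ c * Real.sqrt r := by
    intro b
    rw [hvdef]
    rw [euclid_norm]
    rw [show (Q⁻¹ *ᵥ y b) ⬝ᵥ (Q⁻¹ *ᵥ y b) = y b ⬝ᵥ P⁻¹ *ᵥ y b by
      nth_rewrite 1 [show (Q⁻¹ *ᵥ y b) ⬝ᵥ (Q⁻¹ *ᵥ y b) = y b ⬝ᵥ Q⁻¹ *ᵥ (Q⁻¹ *ᵥ y b) from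
        symm_dot hQisym (y b) (Q⁻¹ *ᵥ y b)]
      rw [mulVec_mulVec, hPinv]]
    calc Real.sqrt (y b ⬝ᵥ P⁻¹ *ᵥ y b) ≤ Real.sqrt (c ^ 2 * r) := Real.sqrt_le_sqrt (hyb b)
      _ = c * Real.sqrt r := by
          rw [Real.sqrt_mul (sq_nonneg c), Real.sqrt_sq hc0]
  -- conclude
  have hmem : c * Real.sqrt r ∈ {R : ℝ | 0 ≤ R ∧ ∃ (d : ℕ) (u : A → EuclideanSpace ℝ (Fin d))
      (v : B → EuclideanSpace ℝ (Fin d)),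
      (∀ a b, M a b = inner ℝ (u a) (v b)) ∧ ∀ a b, ‖u a‖ * ‖v b‖ ≤ R} := by
    refine ⟨mul_nonneg hc0 (Real.sqrt_nonneg _), r, u, v, hinner, fun a b => ?_⟩
    calc ‖u a‖ * ‖v b‖ ≤ 1 * (c * Real.sqrt r) :=
          mul_le_mul (hnu a) (hnv b) (norm_nonneg _) one_pos.le
      _ = c * Real.sqrt r := one_mul _
  have hbdd : BddBelow {R : ℝ | 0 ≤ R ∧ ∃ (d : ℕ) (u : A → EuclideanSpace ℝ (Fin d))
      (v : B → EuclideanSpace ℝ (Fin d)),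
      (∀ a b, M a b = inner ℝ (u a) (v b)) ∧ ∀ a b, ‖u a‖ * ‖v b‖ ≤ R} :=
    ⟨0, fun R hR => hR.1⟩
  exact csInf_le hbdd hmem
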